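/- The homogeneous quartic P₂(α₁, γ₁) = 5557α₁⁴ − 2994732α₁γ₁³ + 1054782α₁²γ₁² − 168492α₁³γ₁ + 6016437γ₁⁴ has, as a polynomial in h after the substitution γ₁ = hα₁ with α₁ ≠ 0, exactly two real roots h₁ and h₂, and both are positive. -/

import Mathlib

noncomputable def qfun : ℝ → ℝ :=
  fun h => 6016437 * h ^ 4 - 2994732 * h ^ 3 + 1054782 * h ^ 2 - 168492 * h + 5557

lemma qfun_cont : Continuous qfun := by unfold qfun; fun_prop

lemma qfun_deriv : deriv qfun = fun x =>
    24065748 * x ^ 3 - 8984196 * x ^ 2 + 2109564 * x - 168492 := by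
  funext x
  have h : HasDerivAt qfun
      (6016437 * (4 * x ^ 3) - 2994732 * (3 * x ^ 2) + 1054782 * (2 * x ^ 1) - 168492 * 1 + 0) x := by
    unfold qfun
    exact ((((((hasDerivAt_pow 4 x).const_mul 6016437).sub
      ((hasDerivAt_pow 3 x).const_mul 2994732)).add
      ((hasDerivAt_pow 2 x).const_mul 1054782)).sub
      ((hasDerivAt_id x).const_mul 168492)).add (hasDerivAt_const x 5557))
  rw [h.deriv]; ring

lemma qfun_deriv2 (x : ℝ) : deriv^[2] qfun x =
    72197244 * x ^ 2 - 17968392 * x + 2109564 := by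
  have : deriv^[2] qfun = deriv (deriv qfun) := rfl
  rw [this, qfun_deriv]
  have h : HasDerivAt (fun x : ℝ =>
      24065748 * x ^ 3 - 8984196 * x ^ 2 + 2109564 * x - 168492)
      (24065748 * (3 * x ^ 2) - 8984196 * (2 * x ^ 1) + 2109564 * 1 - 0) x := by
    exact ((((hasDerivAt_pow 3 x).const_mul 24065748).sub
      ((hasDerivAt_pow 2 x).const_mul 8984196)).add
      ((hasDerivAt_id x).const_mul 2109564)).sub (hasDerivAt_const x 168492)
  rw [h.deriv]; ring

lemma qfun_strictConvex : StrictConvexOn ℝ Set.univ qfun := by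
  apply strictConvexOn_of_deriv2_pos convex_univ qfun_cont.continuousOn
  intro x _
  rw [qfun_deriv2]
  nlinarith [sq_nonneg (144394488 * x - 17968392)]

/-- The homogeneous quartic P₂(α₁, γ₁) = 5557α₁⁴ − 2994732α₁γ₁³ + 1054782α₁²γ₁²
− 168492α₁³γ₁ + 6016437γ₁⁴, after substituting γ₁ = hα₁ with α₁ ≠ 0, has exactly
two real roots h₁, h₂ in h, both positive. -/
theorem stmt_13 (P₂ : ℝ → ℝ → ℝ)
    (hP₂ : P₂ = fun α₁ γ₁ => 5557 * α₁ ^ 4 - 2994732 * α₁ * γ₁ ^ 3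
      + 1054782 * α₁ ^ 2 * γ₁ ^ 2 - 168492 * α₁ ^ 3 * γ₁ + 6016437 * γ₁ ^ 4) :
    ∃ h₁ h₂ : ℝ, h₁ ≠ h₂ ∧ 0 < h₁ ∧ 0 < h₂ ∧
      ∀ α₁ : ℝ, α₁ ≠ 0 → ∀ h : ℝ, (P₂ α₁ (h * α₁) = 0 ↔ h = h₁ ∨ h = h₂) := by
  have hq0 : qfun 0 = 5557 := by norm_num [qfun]
  have hq1 : qfun (1/10) = -31374683/10000 := by norm_num [qfun]
  have hq2 : qfun 1 = 3913552 := by norm_num [qfun]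
  -- root in (0, 1/10)
  have hiv1 : (0:ℝ) ∈ qfun '' Set.Ioo 0 (1/10) := by
    apply intermediate_value_Ioo' (by norm_num) qfun_cont.continuousOn
    rw [hq0, hq1]; constructor <;> norm_num
  have hiv2 : (0:ℝ) ∈ qfun '' Set.Ioo (1/10) 1 := by
    apply intermediate_value_Ioo (by norm_num) qfun_cont.continuousOn
    rw [hq1, hq2]; constructor <;> norm_num
  obtain ⟨h₁, ⟨hh₁0, hh₁u⟩, hqh₁⟩ := hiv1
  obtain ⟨h₂, ⟨hh₂l, hh₂u⟩, hqh₂⟩ := hiv2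
  -- strict convexity ⇒ at most two roots
  have key : ∀ a b c : ℝ, a < b → b < c → qfun a = 0 → qfun c = 0 → qfun b < 0 := by
    intro a b c hab hbc ha hc
    have hconv := qfun_strictConvex.2 (Set.mem_univ a) (Set.mem_univ c)
      (ne_of_lt (hab.trans hbc))
    set t : ℝ := (c - b) / (c - a) with ht
    have hca : 0 < c - a := by linarith
    have ht0 : 0 < t := div_pos (by linarith) hca
    have ht1 : 0 < 1 - t := by
      have : t < 1 := (div_lt_one hca).mpr (by linarith)
      linarith
    have hcomb : t * a + (1 - t) * c = b := by
      rw [ht]; field_simp [hca.ne']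
      ring
    have := hconv ht0 ht1 (by ring)
    rw [smul_eq_mul, smul_eq_mul, smul_eq_mul, smul_eq_mul, hcomb, ha, hc] at this
    simpa using this
  refine ⟨h₁, h₂, ne_of_lt (hh₁u.trans hh₂l), hh₁0, lt_trans (by norm_num) hh₂l, ?_⟩
  intro α₁ hα₁ h
  have hfac : P₂ α₁ (h * α₁) = α₁ ^ 4 * qfun h := by rw [hP₂]; simp only [qfun]; ring
  have hα4 : α₁ ^ 4 ≠ 0 := pow_ne_zero 4 hα₁
  rw [hfac, mul_eq_zero]
  constructor
  · rintro (h0 | h0)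
    · exact absurd h0 hα4
    · -- qfun h = 0 ⇒ h = h₁ ∨ h = h₂
      by_contra hcon
      push_neg at hcon
      obtain ⟨hne1, hne2⟩ := hcon
      have h12 : h₁ < h₂ := hh₁u.trans hh₂l
      rcases lt_trichotomy h h₁ with hlt | heq | hgt
      · exact absurd hqh₁ (ne_of_lt (key h h₁ h₂ hlt h12 h0 hqh₂))
      · exact hne1 heq
      · rcases lt_trichotomy h h₂ with hlt2 | heq2 | hgt2
        · exact absurd h0 (ne_of_lt (key h₁ h h₂ hgt hlt2 hqh₁ hqh₂))
        · exact hne2 heq2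
        · exact absurd hqh₂ (ne_of_lt (key h₁ h₂ h h12 hgt2 hqh₁ h0))
  · rintro (rfl | rfl)
    · exact Or.inr hqh₁
    · exact Or.inr hqh₂
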